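/- Let G be a P_6-free graph with a maximal tripod T = (A_1, A_2, A_3) such that no vertex of G has neighbors in all three classes of T. Then the graph G' obtained from G by contracting T is P_6-free. -/

import Mathlib

/-- `(A 0, A 1, A 2)` is a tripod in `G` with ordering `v : Fin k → V`:
disjoint stable sets covering `{v 0, ..., v (k-1)}`, with `v i ∈ A i` for
`i = 0,1,2`, the root `v 0, v 1, v 2` a triangle, and every vertex `v j` with
`j ≥ 3` having earlier neighbors in both classes other than its own. -/
def IsTripod {V : Type*} (G : SimpleGraph V) (A : Fin 3 → Set V)
    (k : ℕ) (v : Fin k → V) : Prop :=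
  3 ≤ k ∧
  Function.Injective v ∧
  (∀ i j : Fin 3, i ≠ j → Disjoint (A i) (A j)) ∧
  (∀ i : Fin 3, ∀ a ∈ A i, ∀ b ∈ A i, ¬ G.Adj a b) ∧
  ((⋃ i, A i) = Set.range v) ∧
  (∀ i : Fin 3, ∀ hi : (i : ℕ) < k, v ⟨i, hi⟩ ∈ A i) ∧
  (∀ (h0 : 0 < k) (h1 : 1 < k) (h2 : 2 < k),
    G.Adj (v ⟨0, h0⟩) (v ⟨1, h1⟩) ∧ G.Adj (v ⟨0, h0⟩) (v ⟨2, h2⟩) ∧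
      G.Adj (v ⟨1, h1⟩) (v ⟨2, h2⟩)) ∧
  (∀ j : Fin k, 3 ≤ (j : ℕ) → ∀ i : Fin 3, v j ∈ A i →
    ∀ i' : Fin 3, i' ≠ i →
      ∃ j' : Fin k, (j' : ℕ) < (j : ℕ) ∧ v j' ∈ A i' ∧ G.Adj (v j) (v j'))

/-- The sets `(A 0, A 1, A 2)` form a tripod in `G` for some ordering. -/
def IsTripodSets {V : Type*} (G : SimpleGraph V) (A : Fin 3 → Set V) : Prop :=
  ∃ (k : ℕ) (v : Fin k → V), IsTripod G A k v

/-- A maximal tripod: no vertex can be added to any class so that the result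
is still a tripod. -/
def MaximalTripod {V : Type*} (G : SimpleGraph V) (A : Fin 3 → Set V) : Prop :=
  IsTripodSets G A ∧
  ∀ x : V, x ∉ (⋃ i, A i) → ∀ i : Fin 3,
    ¬ IsTripodSets G (Function.update A i (insert x (A i)))
/-- The graph obtained from `G` by contracting the tripod `(A 0, A 1, A 2)`:
each class `A i` is identified to a single vertex (the `Sum.inr i` vertices),
adjacent to the union of the neighborhoods of the vertices of `A i`, with the
three contracted vertices forming a triangle. -/
def contractTripod {V : Type*} (G : SimpleGraph V) (A : Fin 3 → Set V) :
    SimpleGraph ({x : V // x ∉ ⋃ i, A i} ⊕ Fin 3) where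
  Adj x y :=
    match x, y with
    | Sum.inl a, Sum.inl b => G.Adj a.1 b.1
    | Sum.inl a, Sum.inr i => ∃ w ∈ A i, G.Adj a.1 w
    | Sum.inr i, Sum.inl b => ∃ w ∈ A i, G.Adj w b.1
    | Sum.inr i, Sum.inr j => i ≠ j
  symm := by
    constructor
    rintro (a | i) (b | j) h
    · exact h.symm
    · obtain ⟨w, hw, hadj⟩ := h
      exact ⟨w, hw, hadj.symm⟩
    · obtain ⟨w, hw, hadj⟩ := h
      exact ⟨w, hw, hadj.symm⟩
    · exact h.symm
  loopless := by
    constructor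
    rintro (a | i) h
    · exact G.irrefl h
    · exact h rfl


section Aux

open SimpleGraph


lemma six_of_fun {V : Type*} (G : SimpleGraph V)
    (hP6 : IsEmpty (SimpleGraph.pathGraph 6 ↪g G)) (f : ℕ → V)
    (hadj : ∀ i, i < 5 → G.Adj (f i) (f (i+1)))
    (hnadj : ∀ i j, j ≤ 5 → i + 1 < j → ¬ G.Adj (f i) (f j))
    (hinj : ∀ i j, i < j → j ≤ 5 → f i ≠ f j) : False := by
  apply hP6.false
  refine ⟨⟨fun q : Fin 6 => f q, ?_⟩, ?_⟩
  · intro a b hab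
    simp only at hab
    rcases lt_trichotomy (a : ℕ) (b : ℕ) with h | h | h
    · exact absurd hab (hinj a b h (by omega))
    · exact Fin.ext h
    · exact absurd hab.symm (hinj b a h (by omega))
  · intro a b
    simp only [Function.Embedding.coeFn_mk, pathGraph_adj]
    constructor
    · intro h
      by_contra hcon
      push_neg at hcon
      rcases lt_trichotomy (a : ℕ) (b : ℕ) with hlt | heq | hgt
      · exact hnadj a b (by omega) (by omega) h
      · exact G.irrefl (by rw [Fin.ext heq] at h; exact h)
      · exact hnadj b a (by omega) (by omega) h.symm
    · rintro (h | h)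
      · have := hadj a (by omega)
        rwa [h] at this
      · have := hadj b (by omega)
        rw [h] at this
        exact this.symm


lemma connector {V : Type*} (G : SimpleGraph V) (B S T : Set V) :
    ∀ n0 : ℕ, ∀ f0 : ℕ → V,
    (∀ i, i < n0 → G.Adj (f0 i) (f0 (i+1))) → (∀ i, i ≤ n0 → f0 i ∈ B) →
    f0 0 ∈ S → f0 n0 ∈ T →
    ∃ n, ∃ f : ℕ → V,
      (∀ i, i < n → G.Adj (f i) (f (i+1))) ∧ (∀ i, i ≤ n → f i ∈ B) ∧
      f 0 ∈ S ∧ f n ∈ T ∧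
      (∀ i j, i + 1 < j → j ≤ n → ¬ G.Adj (f i) (f j)) ∧
      (∀ i j, i < j → j ≤ n → f i ≠ f j) ∧
      (∀ i, 0 < i → i < n → f i ∉ S ∧ f i ∉ T) := by
  intro n0
  induction n0 using Nat.strong_induction_on with
  | _ n0 IH =>
  intro f0 hc hB hS hT
  by_cases ha : ∃ i, 0 < i ∧ i ≤ n0 ∧ f0 i ∈ S
  · obtain ⟨i, hi0, hin, hiS⟩ := ha
    apply IH (n0 - i) (by omega) (fun t => f0 (t + i))
    · intro t ht
      have h := hc (t + i) (by omega)
      simpa [Nat.add_right_comm] using h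
    · intro t ht; exact hB (t + i) (by omega)
    · simpa using hiS
    · have h : n0 - i + i = n0 := by omega
      simp only [h]; exact hT
  · by_cases hb : ∃ i, i < n0 ∧ f0 i ∈ T
    · obtain ⟨i, hin, hiT⟩ := hb
      exact IH i (by omega) f0 (fun t ht => hc t (by omega))
        (fun t ht => hB t (by omega)) hS hiT
    · by_cases hdup : ∃ i j, i < j ∧ j ≤ n0 ∧ f0 i = f0 j
      · obtain ⟨i, j, hij, hjn, heq⟩ := hdup
        apply IH (n0 - (j - i)) (by omega)
          (fun t => if t ≤ i then f0 t else f0 (t + (j - i)))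
        · intro t ht
          by_cases h1 : t + 1 ≤ i
          · simp only [if_pos (by omega : t ≤ i), if_pos h1]
            exact hc t (by omega)
          · by_cases h2 : t ≤ i
            · simp only [if_pos h2, if_neg h1]
              have ht' : t = i := by omega
              subst ht'
              rw [heq]
              have e : t + 1 + (j - t) = j + 1 := by omega
              rw [e]; exact hc j (by omega)
            · simp only [if_neg h2, if_neg h1]
              have e : t + 1 + (j - i) = (t + (j - i)) + 1 := by omega
              rw [e]; exact hc _ (by omega)
        · intro t ht
          by_cases h : t ≤ i
          · simp only [if_pos h]; exact hB t (by omega)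
          · simp only [if_neg h]; exact hB _ (by omega)
        · simp only [if_pos (Nat.zero_le i)]; exact hS
        · by_cases h : n0 - (j - i) ≤ i
          · simp only [if_pos h]
            have hn0 : n0 = j := by omega
            have e : n0 - (j - i) = i := by omega
            rw [e, heq, ← hn0]; exact hT
          · simp only [if_neg h]
            have e : n0 - (j - i) + (j - i) = n0 := by omega
            rw [e]; exact hT
      · by_cases hch : ∃ i j, i + 1 < j ∧ j ≤ n0 ∧ G.Adj (f0 i) (f0 j)
        · obtain ⟨i, j, hij, hjn, hadj⟩ := hch
          apply IH (n0 - (j - (i + 1))) (by omega)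
            (fun t => if t ≤ i then f0 t else f0 (t + (j - (i + 1))))
          · intro t ht
            by_cases h1 : t + 1 ≤ i
            · simp only [if_pos (by omega : t ≤ i), if_pos h1]
              exact hc t (by omega)
            · by_cases h2 : t ≤ i
              · simp only [if_pos h2, if_neg h1]
                have ht' : t = i := by omega
                subst ht'
                have e : t + 1 + (j - (t + 1)) = j := by omega
                rw [e]; exact hadj
              · simp only [if_neg h2, if_neg h1]
                have e : t + 1 + (j - (i + 1)) = (t + (j - (i + 1))) + 1 := by omega
                rw [e]; exact hc _ (by omega)
          · intro t ht
            by_cases h : t ≤ i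
            · simp only [if_pos h]; exact hB t (by omega)
            · simp only [if_neg h]; exact hB _ (by omega)
          · simp only [if_pos (Nat.zero_le i)]; exact hS
          · have h : ¬ (n0 - (j - (i + 1)) ≤ i) := by omega
            simp only [if_neg h]
            have e : n0 - (j - (i + 1)) + (j - (i + 1)) = n0 := by omega
            rw [e]; exact hT
        · push_neg at ha hb hdup hch
          refine ⟨n0, f0, hc, hB, hS, hT, ?_, ?_, ?_⟩
          · intro p q h1 h2; exact hch p q h1 h2
          · intro p q h1 h2; exact hdup p q h1 h2
          · intro p h0 hn
            exact ⟨ha p h0 (by omega), hb p hn⟩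



variable {V : Type*} {G : SimpleGraph V} {A : Fin 3 → Set V}

lemma tripod_nbr (h : IsTripodSets G A) (c d : Fin 3) (hcd : c ≠ d)
    (w : V) (hwc : w ∈ A c) : ∃ w' ∈ A d, G.Adj w w' := by
  obtain ⟨k, v, h3k, hinj, hdisj, hstab, hcov, hroots, htri, hstep⟩ := h
  have hroot_adj : ∀ (p q : ℕ) (hp : p < 3) (hq : q < 3), p ≠ q →
      G.Adj (v ⟨p, by omega⟩) (v ⟨q, by omega⟩) := by
    intro p q hp hq hpq
    obtain ⟨t1, t2, t3⟩ := htri (by omega) (by omega) (by omega)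
    interval_cases p <;> interval_cases q <;>
      first
        | exact t1 | exact t2 | exact t3
        | exact t1.symm | exact t2.symm | exact t3.symm | omega
  have hw : w ∈ ⋃ i, A i := Set.mem_iUnion.mpr ⟨c, hwc⟩
  rw [hcov] at hw
  obtain ⟨j, rfl⟩ := hw
  by_cases h3 : 3 ≤ (j : ℕ)
  · obtain ⟨j', _, hmem, hadj⟩ := hstep j h3 c hwc d hcd.symm
    exact ⟨v j', hmem, hadj⟩
  · have hj3 : (j : ℕ) < 3 := by omega
    have hjk : ((⟨(j : ℕ), hj3⟩ : Fin 3) : ℕ) < k := by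
      simpa using lt_of_lt_of_le hj3 h3k
    have hmem := hroots ⟨(j : ℕ), hj3⟩ hjk
    have hje : (⟨((⟨(j : ℕ), hj3⟩ : Fin 3) : ℕ), hjk⟩ : Fin k) = j := by
      apply Fin.ext; simp
    rw [hje] at hmem
    have hcr : c = (⟨(j : ℕ), hj3⟩ : Fin 3) := by
      by_contra hne
      exact (hdisj c _ hne).le_bot ⟨hwc, hmem⟩ |>.elim
    have hcj : (c : ℕ) = (j : ℕ) := by rw [hcr]
    have hdk : (d : ℕ) < k := lt_of_lt_of_le d.isLt h3k
    refine ⟨v ⟨(d : ℕ), hdk⟩, hroots d hdk, ?_⟩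
    have hje2 : j = (⟨(c : ℕ), lt_of_lt_of_le c.isLt h3k⟩ : Fin k) := by
      apply Fin.ext; simp [hcj]
    rw [hje2]
    exact hroot_adj c d c.isLt d.isLt (fun he => hcd (Fin.ext he))

lemma tripod_walk (h : IsTripodSets G A) (a b : Fin 3) (hab : a ≠ b)
    (s t : V) (hs : s ∈ A a ∪ A b) (ht : t ∈ A a ∪ A b) :
    ∃ n, ∃ u : ℕ → V, u 0 = s ∧ u n = t ∧
      (∀ i, i < n → G.Adj (u i) (u (i+1))) ∧
      (∀ i, i ≤ n → u i ∈ A a ∪ A b) := by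
  obtain ⟨k, v, h3k, hinj, hdisj, hstab, hcov, hroots, htri, hstep⟩ := h
  have hroot_adj : ∀ (p q : ℕ) (hp : p < 3) (hq : q < 3), p ≠ q →
      G.Adj (v ⟨p, by omega⟩) (v ⟨q, by omega⟩) := by
    intro p q hp hq hpq
    obtain ⟨t1, t2, t3⟩ := htri (by omega) (by omega) (by omega)
    interval_cases p <;> interval_cases q <;>
      first
        | exact t1 | exact t2 | exact t3
        | exact t1.symm | exact t2.symm | exact t3.symm | omega
  set root : V := v ⟨(a : ℕ), lt_of_lt_of_le a.isLt h3k⟩ with hrootdef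
  have hrootA : root ∈ A a := hroots a _
  -- every vertex of A a ∪ A b reaches root inside A a ∪ A b
  have wtr : ∀ N : ℕ, ∀ j : Fin k, (j : ℕ) ≤ N → v j ∈ A a ∪ A b →
      ∃ n, ∃ u : ℕ → V, u 0 = v j ∧ u n = root ∧
        (∀ i, i < n → G.Adj (u i) (u (i+1))) ∧
        (∀ i, i ≤ n → u i ∈ A a ∪ A b) := by
    intro N
    induction N using Nat.strong_induction_on with
    | _ N IH =>
    intro j hjN hmem
    have hclass : ∀ (r : Fin 3), v j ∈ A r → (j : ℕ) < 3 → (r : ℕ) = (j : ℕ) := by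
      intro r hr hj3
      have hjk : ((⟨(j : ℕ), hj3⟩ : Fin 3) : ℕ) < k := by
        simpa using lt_of_lt_of_le hj3 h3k
      have hmem2 := hroots ⟨(j : ℕ), hj3⟩ hjk
      have hje : (⟨((⟨(j : ℕ), hj3⟩ : Fin 3) : ℕ), hjk⟩ : Fin k) = j := by
        apply Fin.ext; simp
      rw [hje] at hmem2
      have : r = (⟨(j : ℕ), hj3⟩ : Fin 3) := by
        by_contra hne
        exact (hdisj r _ hne).le_bot ⟨hr, hmem2⟩ |>.elim
      rw [this]
    by_cases h3 : (j : ℕ) < 3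
    · rcases hmem with hma | hmb
      · refine ⟨0, fun _ => v j, rfl, ?_, by omega, fun i hi => Or.inl hma⟩
        have hav : (a : ℕ) = (j : ℕ) := hclass a hma h3
        rw [hrootdef]
        exact congrArg v (Fin.ext hav.symm)
      · refine ⟨1, fun i => if i = 0 then v j else root, by simp, by simp, ?_, ?_⟩
        · intro i hi
          have : i = 0 := by omega
          subst this
          simp only [if_pos rfl, if_neg one_ne_zero]
          have hbj : (b : ℕ) = (j : ℕ) := hclass b hmb h3
          have : j = (⟨(b : ℕ), lt_of_lt_of_le b.isLt h3k⟩ : Fin k) := by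
            apply Fin.ext; simp [hbj]
          rw [this, hrootdef]
          exact hroot_adj b a b.isLt a.isLt (fun he => hab (Fin.ext he.symm))
        · intro i hi
          by_cases h : i = 0
          · simp [h, hmb]
          · simp [h, Or.inl hrootA]
    · push_neg at h3
      have step : ∀ (m o : Fin 3), m ≠ o → v j ∈ A m → A m ∪ A o = A a ∪ A b →
          ∃ n, ∃ u : ℕ → V, u 0 = v j ∧ u n = root ∧
            (∀ i, i < n → G.Adj (u i) (u (i+1))) ∧
            (∀ i, i ≤ n → u i ∈ A a ∪ A b) := by
        intro m o hmo hm hU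
        obtain ⟨j', hlt, hmem', hadj⟩ := hstep j h3 m hm o (Ne.symm hmo)
        have hj'mem : v j' ∈ A a ∪ A b := by rw [← hU]; exact Or.inr hmem'
        obtain ⟨n, u, hu0, hun, huc, huB⟩ :=
          IH (j' : ℕ) (by omega) j' (le_refl _) hj'mem
        refine ⟨n + 1, fun i => if i = 0 then v j else u (i - 1), by simp, ?_, ?_, ?_⟩
        · simp only [if_neg (Nat.succ_ne_zero n)]
          simpa using hun
        · intro i hi
          by_cases h0 : i = 0
          · subst h0
            simp only [if_pos rfl, if_neg one_ne_zero]
            simpa [hu0] using hadj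
          · simp only [if_neg h0, if_neg (by omega : i + 1 ≠ 0)]
            have e : i + 1 - 1 = (i - 1) + 1 := by omega
            rw [e]
            exact huc (i - 1) (by omega)
        · intro i hi
          by_cases h0 : i = 0
          · simp [h0, hmem]
          · simp only [if_neg h0]
            exact huB (i - 1) (by omega)
      rcases hmem with hma | hmb
      · exact step a b hab hma rfl
      · exact step b a (Ne.symm hab) hmb (Set.union_comm _ _)
  -- now connect s to t through root
  have hmemU : ∀ x, x ∈ A a ∪ A b → ∃ j : Fin k, v j = x := by
    intro x hx
    have hx' : x ∈ ⋃ i, A i := by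
      rcases hx with h | h
      · exact Set.mem_iUnion.mpr ⟨a, h⟩
      · exact Set.mem_iUnion.mpr ⟨b, h⟩
    rw [hcov] at hx'
    exact hx'
  obtain ⟨js, hjs⟩ := hmemU s hs
  obtain ⟨jt, hjt⟩ := hmemU t ht
  obtain ⟨n1, u1, hu10, hu1n, hu1c, hu1B⟩ := wtr (js : ℕ) js (le_refl _) (by rw [hjs]; exact hs)
  obtain ⟨n2, u2, hu20, hu2n, hu2c, hu2B⟩ := wtr (jt : ℕ) jt (le_refl _) (by rw [hjt]; exact ht)
  refine ⟨n1 + n2, fun i => if i ≤ n1 then u1 i else u2 (n1 + n2 - i), ?_, ?_, ?_, ?_⟩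
  · simp only [if_pos (Nat.zero_le n1)]
    rw [hu10, hjs]
  · by_cases h : n1 + n2 ≤ n1
    · have hn2 : n2 = 0 := by omega
      simp only [if_pos h]
      have : n1 + n2 = n1 := by omega
      rw [this, hu1n]
      rw [← hu2n, hn2, hu20, hjt]
    · simp only [if_neg h]
      have : n1 + n2 - (n1 + n2) = 0 := by omega
      rw [this, hu20, hjt]
  · intro i hi
    by_cases h1 : i + 1 ≤ n1
    · simp only [if_pos (by omega : i ≤ n1), if_pos h1]
      exact hu1c i (by omega)
    · by_cases h2 : i ≤ n1
      · have hie : i = n1 := by omega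
        have hn2 : 1 ≤ n2 := by omega
        simp only [if_pos h2, if_neg h1]
        rw [hie, hu1n]
        have e : n1 + n2 - (n1 + 1) = n2 - 1 := by omega
        rw [e]
        have := hu2c (n2 - 1) (by omega)
        have e2 : n2 - 1 + 1 = n2 := by omega
        rw [e2, hu2n] at this
        exact this.symm
      · simp only [if_neg h2, if_neg h1]
        have e : n1 + n2 - i = (n1 + n2 - (i + 1)) + 1 := by omega
        rw [e]
        exact (hu2c (n1 + n2 - (i + 1)) (by omega)).symm
  · intro i hi
    by_cases h : i ≤ n1
    · simp only [if_pos h]; exact hu1B i (by omega)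
    · simp only [if_neg h]; exact hu2B _ (by omega)



lemma tripod_connect {V : Type*} {G : SimpleGraph V} {A : Fin 3 → Set V}
    (h : IsTripodSets G A) (a b : Fin 3) (hab : a ≠ b)
    (S T : Set V) (hSne : S.Nonempty) (hTne : T.Nonempty)
    (hSA : S ⊆ A a ∪ A b) (hTA : T ⊆ A a ∪ A b) :
    ∃ n, ∃ u : ℕ → V,
      (∀ i, i < n → G.Adj (u i) (u (i+1))) ∧ (∀ i, i ≤ n → u i ∈ A a ∪ A b) ∧
      u 0 ∈ S ∧ u n ∈ T ∧
      (∀ i j, i + 1 < j → j ≤ n → ¬ G.Adj (u i) (u j)) ∧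
      (∀ i j, i < j → j ≤ n → u i ≠ u j) ∧
      (∀ i, 0 < i → i < n → u i ∉ S ∧ u i ∉ T) := by
  obtain ⟨s, hs⟩ := hSne
  obtain ⟨t, ht⟩ := hTne
  obtain ⟨n0, u0, h00, h0n, h0c, h0B⟩ := tripod_walk h a b hab s t (hSA hs) (hTA ht)
  exact connector G (A a ∪ A b) S T n0 u0 h0c h0B (by rw [h00]; exact hs)
    (by rw [h0n]; exact ht)

lemma one_class {V : Type*} {G : SimpleGraph V} {A : Fin 3 → Set V}
    (hmax : MaximalTripod G A)
    (hno : ∀ x : V, x ∉ (⋃ i, A i) → ¬ ∀ i : Fin 3, ∃ w ∈ A i, G.Adj x w)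
    (x : V) (hx : x ∉ ⋃ i, A i) (c d : Fin 3) (hcd : c ≠ d)
    (hc : ∃ w ∈ A c, G.Adj x w) (hd : ∃ w ∈ A d, G.Adj x w) : False := by
  obtain ⟨m, hmc, hmd, hall⟩ :
      ∃ m : Fin 3, m ≠ c ∧ m ≠ d ∧ ∀ i : Fin 3, i = c ∨ i = d ∨ i = m := by
    fin_cases c <;> fin_cases d <;> first | (exact absurd rfl hcd) | decide
  have hm : ¬ ∃ w ∈ A m, G.Adj x w := by
    intro hmn
    apply hno x hx
    intro i
    rcases hall i with rfl | rfl | rfl <;> assumption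
  obtain ⟨k, v, h3k, hinj, hdisj, hstab, hcov, hroots, htri, hstep⟩ := hmax.1
  have hxv : x ∉ Set.range v := by rw [← hcov]; exact hx
  have hA'm : Function.update A m (insert x (A m)) m = insert x (A m) :=
    Function.update_self m _ A
  have hA'o : ∀ i : Fin 3, i ≠ m → Function.update A m (insert x (A m)) i = A i :=
    fun i hi => Function.update_of_ne hi _ A
  have hsub : ∀ i : Fin 3, A i ⊆ Function.update A m (insert x (A m)) i := by
    intro i
    by_cases h : i = m
    · subst h; rw [hA'm]; exact Set.subset_insert _ _
    · rw [hA'o i h]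
  set v' : Fin (k + 1) → V := fun j => if h : (j : ℕ) < k then v ⟨(j : ℕ), h⟩ else x
    with hv'def
  have hvlt : ∀ (j : Fin (k + 1)) (h : (j : ℕ) < k), v' j = v ⟨(j : ℕ), h⟩ := by
    intro j h; simp only [hv'def, dif_pos h]
  have hvk : ∀ (j : Fin (k + 1)), ¬ ((j : ℕ) < k) → v' j = x := by
    intro j h; simp only [hv'def, dif_neg h]
  apply hmax.2 x hx m
  refine ⟨k + 1, v', by omega, ?_, ?_, ?_, ?_, ?_, ?_, ?_⟩
  · -- injective
    intro j1 j2 h12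
    by_cases h1 : (j1 : ℕ) < k <;> by_cases h2 : (j2 : ℕ) < k
    · rw [hvlt j1 h1, hvlt j2 h2] at h12
      have := hinj h12
      exact Fin.ext (by simpa using congrArg Fin.val this)
    · rw [hvlt j1 h1, hvk j2 h2] at h12
      exact absurd ⟨_, h12⟩ hxv
    · rw [hvk j1 h1, hvlt j2 h2] at h12
      exact absurd ⟨_, h12.symm⟩ hxv
    · exact Fin.ext (by omega)
  · -- disjoint
    intro i j hij
    by_cases hi : i = m
    · subst hi
      rw [hA'm, hA'o j (Ne.symm hij)]
      rw [Set.disjoint_left]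
      rintro y (rfl | hy) hyj
      · exact hx (Set.mem_iUnion.mpr ⟨j, hyj⟩)
      · exact (hdisj i j hij).le_bot ⟨hy, hyj⟩
    · rw [hA'o i hi]
      by_cases hj : j = m
      · subst hj
        rw [hA'm, Set.disjoint_left]
        rintro y hy (rfl | hyj)
        · exact hx (Set.mem_iUnion.mpr ⟨i, hy⟩)
        · exact (hdisj i j hij).le_bot ⟨hy, hyj⟩
      · rw [hA'o j hj]
        exact hdisj i j hij
  · -- stable
    intro i a ha b hb
    by_cases hi : i = m
    · subst hi
      rw [hA'm] at ha hb
      rcases ha with ha | ha <;> rcases hb with hb | hb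
      · rw [ha, hb]; exact G.irrefl
      · rw [ha]; exact fun h => hm ⟨b, hb, h⟩
      · rw [hb]; exact fun h => hm ⟨a, ha, h.symm⟩
      · exact hstab i a ha b hb
    · rw [hA'o i hi] at ha hb
      exact hstab i a ha b hb
  · -- coverage
    ext y
    simp only [Set.mem_iUnion, Set.mem_range]
    constructor
    · rintro ⟨i, hyi⟩
      by_cases hi : i = m
      · subst hi
        rw [hA'm] at hyi
        rcases hyi with rfl | hyi
        · exact ⟨⟨k, by omega⟩, hvk _ (by simp)⟩
        · have : y ∈ Set.range v := by
            rw [← hcov]; exact Set.mem_iUnion.mpr ⟨i, hyi⟩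
          obtain ⟨j, rfl⟩ := this
          exact ⟨⟨(j : ℕ), by omega⟩, by rw [hvlt _ (by simpa using j.isLt)]⟩
      · rw [hA'o i hi] at hyi
        have : y ∈ Set.range v := by
          rw [← hcov]; exact Set.mem_iUnion.mpr ⟨i, hyi⟩
        obtain ⟨j, rfl⟩ := this
        exact ⟨⟨(j : ℕ), by omega⟩, by rw [hvlt _ (by simpa using j.isLt)]⟩
    · rintro ⟨j, rfl⟩
      by_cases h : (j : ℕ) < k
      · rw [hvlt j h]
        have : v ⟨(j : ℕ), h⟩ ∈ ⋃ i, A i := by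
          rw [hcov]; exact ⟨_, rfl⟩
        obtain ⟨i, hi⟩ := Set.mem_iUnion.mp this
        exact ⟨i, hsub i hi⟩
      · rw [hvk j h]
        exact ⟨m, by rw [hA'm]; exact Set.mem_insert _ _⟩
  · -- roots
    intro i hi
    have hik : (i : ℕ) < k := by omega
    rw [hvlt _ hik]
    exact hsub i (hroots i hik)
  · -- triangle
    intro h0 h1 h2
    obtain ⟨t1, t2, t3⟩ := htri (by omega) (by omega) (by omega)
    have e0 : v' ⟨0, h0⟩ = v ⟨0, by omega⟩ := hvlt _ (show (0:ℕ) < k by omega)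
    have e1 : v' ⟨1, h1⟩ = v ⟨1, by omega⟩ := hvlt _ (show (1:ℕ) < k by omega)
    have e2 : v' ⟨2, h2⟩ = v ⟨2, by omega⟩ := hvlt _ (show (2:ℕ) < k by omega)
    rw [e0, e1, e2]
    exact ⟨t1, t2, t3⟩
  · -- growth condition
    intro j hj3 i hji i' hii'
    by_cases hjk : (j : ℕ) < k
    · rw [hvlt j hjk] at hji ⊢
      have hAi : v ⟨(j : ℕ), hjk⟩ ∈ A i := by
        by_cases hi : i = m
        · subst hi
          rw [hA'm] at hji
          rcases hji with he | hji
          · exact absurd (⟨⟨(j : ℕ), hjk⟩, he⟩ : x ∈ Set.range v) hxv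
          · exact hji
        · rwa [hA'o i hi] at hji
      obtain ⟨j', hlt, hmem, hadj⟩ := hstep ⟨(j : ℕ), hjk⟩ hj3 i hAi i' hii'
      refine ⟨⟨(j' : ℕ), by omega⟩, by simpa using hlt, ?_, ?_⟩
      · rw [hvlt _ (by simpa using j'.isLt)]
        exact hsub i' (by simpa using hmem)
      · rw [hvlt _ (by simpa using j'.isLt)]
        simpa using hadj
    · have hv'j : v' j = x := hvk j hjk
      rw [hv'j] at hji ⊢
      have him : i = m := by
        by_contra hne
        rw [hA'o i hne] at hji
        exact hx (Set.mem_iUnion.mpr ⟨i, hji⟩)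
      subst him
      have hi' : i' = c ∨ i' = d := by
        rcases hall i' with h | h | h
        · exact Or.inl h
        · exact Or.inr h
        · exact absurd h hii'
      have key : ∀ e : Fin 3, e ≠ i → (∃ w ∈ A e, G.Adj x w) →
          ∃ j' : Fin (k+1), (j' : ℕ) < (j : ℕ) ∧
            v' j' ∈ Function.update A i (insert x (A i)) e ∧ G.Adj x (v' j') := by
        intro e he hew
        obtain ⟨w, hwe, hadjw⟩ := hew
        have hwr : w ∈ Set.range v := by
          rw [← hcov]; exact Set.mem_iUnion.mpr ⟨e, hwe⟩
        obtain ⟨jw, rfl⟩ := hwr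
        have h1 := jw.isLt
        have h2 := j.isLt
        refine ⟨⟨(jw : ℕ), by omega⟩, show ((jw : ℕ)) < (j : ℕ) by omega, ?_, ?_⟩
        · rw [hvlt _ (by simpa using jw.isLt), hA'o e he]
          simpa using hwe
        · rw [hvlt _ (by simpa using jw.isLt)]
          simpa using hadjw
      rcases hi' with rfl | rfl
      · exact key i' (Ne.symm hmc) hc
      · exact key i' (Ne.symm hmd) hd

lemma splice_six {V : Type*} (G : SimpleGraph V)
    (hP6 : IsEmpty (SimpleGraph.pathGraph 6 ↪g G)) (a b n : ℕ)
    (ha : 1 ≤ a) (hb : 1 ≤ b) (htot : 5 ≤ a + n + b)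
    (p u q : ℕ → V)
    (hPadj : ∀ t, t + 1 < a → G.Adj (p t) (p (t+1)))
    (hPU : G.Adj (p (a-1)) (u 0))
    (hUadj : ∀ t, t < n → G.Adj (u t) (u (t+1)))
    (hUQ : G.Adj (u n) (q 0))
    (hQadj : ∀ t, t + 1 < b → G.Adj (q t) (q (t+1)))
    (hPP : ∀ s t, s + 1 < t → t < a → ¬ G.Adj (p s) (p t))
    (hPPne : ∀ s t, s < t → t < a → p s ≠ p t)
    (hPUn : ∀ s t, s < a → t ≤ n → ¬ (s = a - 1 ∧ t = 0) → ¬ G.Adj (p s) (u t))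
    (hPUne : ∀ s t, s < a → t ≤ n → p s ≠ u t)
    (hUU : ∀ s t, s + 1 < t → t ≤ n → ¬ G.Adj (u s) (u t))
    (hUUne : ∀ s t, s < t → t ≤ n → u s ≠ u t)
    (hUQn : ∀ s t, s ≤ n → t < b → ¬ (s = n ∧ t = 0) → ¬ G.Adj (u s) (q t))
    (hUQne : ∀ s t, s ≤ n → t < b → u s ≠ q t)
    (hQQ : ∀ s t, s + 1 < t → t < b → ¬ G.Adj (q s) (q t))
    (hQQne : ∀ s t, s < t → t < b → q s ≠ q t)
    (hPQ : ∀ s t, s < a → t < b → ¬ G.Adj (p s) (q t))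
    (hPQne : ∀ s t, s < a → t < b → p s ≠ q t) : False := by
  set f : ℕ → V := fun t => if t < a then p t else if t ≤ a + n then u (t - a)
    else q (t - (a + n + 1)) with hfdef
  have hfp : ∀ t, t < a → f t = p t := by
    intro t ht; simp only [hfdef, if_pos ht]
  have hfu : ∀ t, a ≤ t → t ≤ a + n → f t = u (t - a) := by
    intro t h1 h2; simp only [hfdef, if_neg (by omega : ¬ t < a), if_pos h2]
  have hfq : ∀ t, a + n < t → f t = q (t - (a + n + 1)) := by
    intro t h1
    simp only [hfdef, if_neg (by omega : ¬ t < a), if_neg (by omega : ¬ t ≤ a + n)]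
  have hN : ∀ i, i < a + n + b → G.Adj (f i) (f (i+1)) := by
    intro i hi
    by_cases h1 : i + 1 < a
    · rw [hfp i (by omega), hfp (i+1) h1]; exact hPadj i h1
    · by_cases h2 : i + 1 = a
      · rw [hfp i (by omega), hfu (i+1) (by omega) (by omega)]
        have e1 : i = a - 1 := by omega
        have e2 : i + 1 - a = 0 := by omega
        rw [e2, e1]; exact hPU
      · by_cases h3 : i + 1 ≤ a + n
        · rw [hfu i (by omega) (by omega), hfu (i+1) (by omega) h3]
          have e : i + 1 - a = (i - a) + 1 := by omega
          rw [e]; exact hUadj (i - a) (by omega)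
        · by_cases h4 : i = a + n
          · rw [hfu i (by omega) (by omega), hfq (i+1) (by omega)]
            have e1 : i - a = n := by omega
            have e2 : i + 1 - (a + n + 1) = 0 := by omega
            rw [e1, e2]; exact hUQ
          · rw [hfq i (by omega), hfq (i+1) (by omega)]
            have e : i + 1 - (a + n + 1) = (i - (a + n + 1)) + 1 := by omega
            rw [e]
            exact hQadj _ (by omega)
  have hNn : ∀ i j, i + 1 < j → j ≤ a + n + b → ¬ G.Adj (f i) (f j) := by
    intro i j hij hj
    by_cases hi1 : i < a
    · rw [hfp i hi1]
      by_cases hj1 : j < a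
      · rw [hfp j hj1]; exact hPP i j hij hj1
      · by_cases hj2 : j ≤ a + n
        · rw [hfu j (by omega) hj2]
          exact hPUn i (j - a) hi1 (by omega) (by omega)
        · rw [hfq j (by omega)]
          exact hPQ i _ hi1 (by omega)
    · by_cases hi2 : i ≤ a + n
      · rw [hfu i (by omega) hi2]
        by_cases hj2 : j ≤ a + n
        · rw [hfu j (by omega) hj2]
          have e : j - a = (i - a) + (j - i) := by omega
          exact hUU (i - a) (j - a) (by omega) (by omega)
        · rw [hfq j (by omega)]
          exact hUQn (i - a) _ (by omega) (by omega) (by omega)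
      · rw [hfq i (by omega), hfq j (by omega)]
        exact hQQ _ _ (by omega) (by omega)
  have hNe : ∀ i j, i < j → j ≤ a + n + b → f i ≠ f j := by
    intro i j hij hj
    by_cases hi1 : i < a
    · rw [hfp i hi1]
      by_cases hj1 : j < a
      · rw [hfp j hj1]; exact hPPne i j hij hj1
      · by_cases hj2 : j ≤ a + n
        · rw [hfu j (by omega) hj2]; exact hPUne i _ hi1 (by omega)
        · rw [hfq j (by omega)]; exact hPQne i _ hi1 (by omega)
    · by_cases hi2 : i ≤ a + n
      · rw [hfu i (by omega) hi2]
        by_cases hj2 : j ≤ a + n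
        · rw [hfu j (by omega) hj2]; exact hUUne _ _ (by omega) (by omega)
        · rw [hfq j (by omega)]; exact hUQne _ _ (by omega) (by omega)
      · rw [hfq i (by omega), hfq j (by omega)]
        exact hQQne _ _ (by omega) (by omega)
  exact six_of_fun G hP6 f (fun i hi => hN i (by omega))
    (fun i j hj hij => hNn i j hij (by omega))
    (fun i j hij hj => hNe i j hij (by omega))


lemma case1_disjoint {V : Type*} {G : SimpleGraph V} {A : Fin 3 → Set V}
    (hmax : MaximalTripod G A)
    (hno : ∀ x : V, x ∉ (⋃ i, A i) → ¬ ∀ i : Fin 3, ∃ w ∈ A i, G.Adj x w)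
    (hP6 : IsEmpty (SimpleGraph.pathGraph 6 ↪g G))
    (i : Fin 3) (xa xb xo : V)
    (hxaU : xa ∉ ⋃ t, A t) (hxbU : xb ∉ ⋃ t, A t) (hxoU : xo ∉ ⋃ t, A t)
    (hSa : ∃ w ∈ A i, G.Adj xa w) (hTb : ∃ w ∈ A i, G.Adj xb w)
    (hnc : ¬ ∃ w ∈ A i, G.Adj xa w ∧ G.Adj xb w)
    (hab : ¬ G.Adj xa xb) (hao : ¬ G.Adj xa xo) (hbo : G.Adj xb xo)
    (hoi : ¬ ∃ w ∈ A i, G.Adj xo w)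
    (hab' : xa ≠ xb) (hao' : xa ≠ xo) : False := by
  obtain ⟨k, v, h3k, hinjv, hdisj, hstab, hcov, hroots, htri, hstep⟩ := hmax.1
  have hST : ∀ w, w ∈ {w | w ∈ A i ∧ G.Adj xa w} → w ∈ {w | w ∈ A i ∧ G.Adj xb w} → False :=
    fun w hS hT => hnc ⟨w, hS.1, hS.2, hT.2⟩
  obtain ⟨c, d, hci, hdi, hcd, hall⟩ :
      ∃ c d : Fin 3, c ≠ i ∧ d ≠ i ∧ c ≠ d ∧ ∀ t : Fin 3, t = i ∨ t = c ∨ t = d := by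
    fin_cases i
    · exact ⟨1, 2, by decide, by decide, by decide, by decide⟩
    · exact ⟨0, 2, by decide, by decide, by decide, by decide⟩
    · exact ⟨0, 1, by decide, by decide, by decide, by decide⟩
  have key : ∀ e : Fin 3, e ≠ i → ¬ (∃ w ∈ A e, G.Adj xo w) → False := by
    intro e hei hoe
    obtain ⟨w1, hw1, hw1a⟩ := hSa
    obtain ⟨w2, hw2, hw2a⟩ := hTb
    obtain ⟨n, u, huc, huB, huS, huT, hchord, huinj, huint⟩ :=
      tripod_connect hmax.1 i e (Ne.symm hei)
        {w | w ∈ A i ∧ G.Adj xa w} {w | w ∈ A i ∧ G.Adj xb w}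
        ⟨w1, hw1, hw1a⟩ ⟨w2, hw2, hw2a⟩
        (fun w hw => Or.inl hw.1) (fun w hw => Or.inl hw.1)
    have hn2 : 2 ≤ n := by
      by_contra hcon
      push_neg at hcon
      interval_cases n
      · exact hST _ huS huT
      · exact hstab i _ huS.1 _ huT.1 (huc 0 (by omega))
    have hxa_u : ∀ t, 1 ≤ t → t ≤ n → ¬ G.Adj xa (u t) := by
      intro t h1 h2 hadj
      rcases huB t h2 with hAi | hAe
      · by_cases htn : t = n
        · subst htn; exact hnc ⟨u t, hAi, hadj, huT.2⟩
        · exact (huint t h1 (by omega)).1 ⟨hAi, hadj⟩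
      · exact one_class hmax hno xa hxaU i e (Ne.symm hei) ⟨w1, hw1, hw1a⟩ ⟨u t, hAe, hadj⟩
    have hxb_u : ∀ t, t < n → ¬ G.Adj xb (u t) := by
      intro t ht hadj
      rcases huB t (by omega) with hAi | hAe
      · by_cases ht0 : t = 0
        · subst ht0; exact hnc ⟨u 0, hAi, huS.2, hadj⟩
        · exact (huint t (by omega) ht).2 ⟨hAi, hadj⟩
      · exact one_class hmax hno xb hxbU i e (Ne.symm hei) ⟨w2, hw2, hw2a⟩ ⟨u t, hAe, hadj⟩
    have hxo_u : ∀ t, t ≤ n → ¬ G.Adj xo (u t) := by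
      intro t ht hadj
      rcases huB t ht with hAi | hAe
      · exact hoi ⟨u t, hAi, hadj⟩
      · exact hoe ⟨u t, hAe, hadj⟩
    have hne_u : ∀ (x : V), x ∉ (⋃ t, A t) → ∀ t, t ≤ n → x ≠ u t := by
      intro x hx t ht he
      apply hx
      rcases huB t ht with h | h
      · rw [he]; exact Set.mem_iUnion.mpr ⟨i, h⟩
      · rw [he]; exact Set.mem_iUnion.mpr ⟨e, h⟩
    apply splice_six G hP6 1 2 n (le_refl 1) (by omega) (by omega)
      (fun _ => xa) u (fun t => if t = 0 then xb else xo)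
    · intro t ht; exact absurd ht (by omega)
    · exact huS.2
    · exact huc
    · simp only [if_pos rfl]; exact huT.2.symm
    · intro t ht
      have : t = 0 := by omega
      subst this
      simp only [if_pos rfl, if_neg one_ne_zero]
      exact hbo
    · intro s t h1 h2; omega
    · intro s t h1 h2; omega
    · intro s t hs ht hst
      have hs0 : s = 0 := by omega
      exact hxa_u t (by omega) ht
    · intro s t hs ht; exact hne_u xa hxaU t ht
    · exact hchord
    · exact huinj
    · intro s t hs ht hst
      by_cases h0 : t = 0
      · subst h0
        simp only [if_pos rfl]
        exact fun h => hxb_u s (by omega) h.symm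
      · simp only [if_neg h0]
        exact fun h => hxo_u s hs h.symm
    · intro s t hs ht
      by_cases h0 : t = 0
      · subst h0
        simp only [if_pos rfl]
        exact fun h => hne_u xb hxbU s hs h.symm
      · simp only [if_neg h0]
        exact fun h => hne_u xo hxoU s hs h.symm
    · intro s t h1 h2; omega
    · intro s t h1 h2
      have hs0 : s = 0 := by omega
      have ht1 : t = 1 := by omega
      subst hs0; subst ht1
      simp only [if_pos rfl, if_neg one_ne_zero]
      exact hbo.ne
    · intro s t hs ht
      by_cases h0 : t = 0
      · subst h0; simp only [if_pos rfl]; exact hab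
      · simp only [if_neg h0]; exact hao
    · intro s t hs ht
      by_cases h0 : t = 0
      · subst h0; simp only [if_pos rfl]; exact hab'
      · simp only [if_neg h0]; exact hao'
  by_cases hc1 : ∃ w ∈ A c, G.Adj xo w
  · by_cases hd1 : ∃ w ∈ A d, G.Adj xo w
    · exact one_class hmax hno xo hxoU c d hcd hc1 hd1
    · exact key d hdi hd1
  · exact key c hci hc1

end Aux

lemma extract_facts {V : Type*} {G : SimpleGraph V} {A : Fin 3 → Set V}
    (e : SimpleGraph.pathGraph 6 ↪g contractTripod G A) (z : V)
    (ok : Fin 6 → Prop)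
    (hL : ∀ p, ok p → ∃ x : {x : V // x ∉ ⋃ i, A i}, e p = Sum.inl x) :
    ∃ xE : ℕ → V,
      (∀ r (h : r < 6), ok ⟨r, h⟩ → xE r ∉ ⋃ i, A i) ∧
      (∀ r s (hr : r < 6) (hs : s < 6), ok ⟨r, hr⟩ → ok ⟨s, hs⟩ →
        (r + 1 = s ∨ s + 1 = r) → G.Adj (xE r) (xE s)) ∧
      (∀ r s (hr : r < 6) (hs : s < 6), ok ⟨r, hr⟩ → ok ⟨s, hs⟩ →
        ¬ (r + 1 = s ∨ s + 1 = r) → ¬ G.Adj (xE r) (xE s)) ∧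
      (∀ r s (hr : r < 6) (hs : s < 6), ok ⟨r, hr⟩ → ok ⟨s, hs⟩ →
        r ≠ s → xE r ≠ xE s) ∧
      (∀ r (hr : r < 6) (c : Fin 3) (pc : Fin 6), ok ⟨r, hr⟩ → e pc = Sum.inr c →
        ((r + 1 = (pc : ℕ) ∨ (pc : ℕ) + 1 = r) → ∃ w ∈ A c, G.Adj (xE r) w) ∧
        (¬ (r + 1 = (pc : ℕ) ∨ (pc : ℕ) + 1 = r) → ¬ ∃ w ∈ A c, G.Adj (xE r) w)) := by
  classical
  have hpe : ∀ p q : Fin 6, (contractTripod G A).Adj (e p) (e q) ↔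
      ((p : ℕ) + 1 = (q : ℕ) ∨ (q : ℕ) + 1 = (p : ℕ)) := by
    intro p q
    rw [e.map_adj_iff, SimpleGraph.pathGraph_adj]
  have einj : Function.Injective e := e.injective
  choose X hX using hL
  refine ⟨fun r => if h : r < 6 then (if hok : ok ⟨r, h⟩ then (X _ hok).1 else z) else z,
    ?_, ?_, ?_, ?_, ?_⟩
  · intro r h hok
    simp only [dif_pos h, dif_pos hok]
    exact (X _ hok).2
  · intro r s hr hs hokr hoks hcons
    simp only [dif_pos hr, dif_pos hs, dif_pos hokr, dif_pos hoks]
    have h := (hpe ⟨r, hr⟩ ⟨s, hs⟩).mpr hcons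
    rw [hX _ hokr, hX _ hoks] at h
    exact h
  · intro r s hr hs hokr hoks hcons hadj
    simp only [dif_pos hr, dif_pos hs, dif_pos hokr, dif_pos hoks] at hadj
    apply hcons
    refine (hpe ⟨r, hr⟩ ⟨s, hs⟩).mp ?_
    rw [hX _ hokr, hX _ hoks]
    exact hadj
  · intro r s hr hs hokr hoks hne heq
    simp only [dif_pos hr, dif_pos hs, dif_pos hokr, dif_pos hoks] at heq
    have h1 : e ⟨r, hr⟩ = e ⟨s, hs⟩ := by
      rw [hX _ hokr, hX _ hoks, Subtype.ext heq]
    have := congrArg Fin.val (einj h1)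
    exact hne this
  · intro r hr c pc hokr hpc
    simp only [dif_pos hr, dif_pos hokr]
    constructor
    · intro hcons
      have h := (hpe ⟨r, hr⟩ pc).mpr hcons
      rw [hX _ hokr, hpc] at h
      exact h
    · intro hcons hexist
      apply hcons
      refine (hpe ⟨r, hr⟩ pc).mp ?_
      rw [hX _ hokr, hpc]
      exact hexist

/-- If `G` is `P₆`-free and `(A 0, A 1, A 2)` is a maximal tripod such that no
vertex of `G` has neighbors in all three classes, then the graph obtained from
`G` by contracting the tripod is `P₆`-free. -/
theorem contractTripod_P6_free {V : Type*} (G : SimpleGraph V)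
    (A : Fin 3 → Set V) (hmax : MaximalTripod G A)
    (hno : ∀ x : V, x ∉ (⋃ i, A i) → ¬ ∀ i : Fin 3, ∃ w ∈ A i, G.Adj x w)
    (hP6 : IsEmpty (SimpleGraph.pathGraph 6 ↪g G)) :
    IsEmpty (SimpleGraph.pathGraph 6 ↪g contractTripod G A) := by
  classical
  refine ⟨fun e => ?_⟩
  have hts : IsTripodSets G A := hmax.1
  obtain ⟨k, v, h3k, hinjv, hdisj, hstab, hcov, hroots, htri, hstep⟩ := hmax.1
  have hpe : ∀ p q : Fin 6, (contractTripod G A).Adj (e p) (e q) ↔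
      ((p : ℕ) + 1 = (q : ℕ) ∨ (q : ℕ) + 1 = (p : ℕ)) := by
    intro p q
    rw [e.map_adj_iff, SimpleGraph.pathGraph_adj]
  have einj : Function.Injective e := e.injective
  by_cases hr : ∃ p : Fin 6, ∃ c : Fin 3, e p = Sum.inr c
  case neg =>
    have hL : ∀ p : Fin 6, True → ∃ x : {x : V // x ∉ ⋃ i, A i}, e p = Sum.inl x := by
      intro p _
      cases he : e p with
      | inl x => exact ⟨x, rfl⟩
      | inr c => exact absurd ⟨p, c, he⟩ hr
    obtain ⟨xE, kU, kadj, knadj, kne, kclass⟩ :=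
      extract_facts e (v ⟨0, by omega⟩) (fun _ => True) hL
    exact six_of_fun G hP6 xE
      (fun t ht => kadj t (t+1) (by omega) (by omega) trivial trivial (Or.inl rfl))
      (fun s t ht hst => knadj s t (by omega) (by omega) trivial trivial (by omega))
      (fun s t hst ht => kne s t (by omega) (by omega) trivial trivial (by omega))
  case pos =>
  obtain ⟨p0, c0, hp0⟩ := hr
  by_cases hr2 : ∃ p1, p1 ≠ p0 ∧ ∃ c, e p1 = Sum.inr c
  · -- ===== two contracted vertices on the path =====
    obtain ⟨p1, hp10, c1, hp1⟩ := hr2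
    have hc01 : c0 ≠ c1 := fun h => hp10 (einj (by rw [hp1, hp0, h]))
    have hcons : (p0 : ℕ) + 1 = (p1 : ℕ) ∨ (p1 : ℕ) + 1 = (p0 : ℕ) :=
      (hpe p0 p1).mp (by rw [hp0, hp1]; exact hc01)
    have hthird : ∀ p : Fin 6, p ≠ p0 → p ≠ p1 →
        ∃ x : {x : V // x ∉ ⋃ i, A i}, e p = Sum.inl x := by
      intro p h0 h1
      cases he : e p with
      | inl x => exact ⟨x, rfl⟩
      | inr c =>
        have hcc0 : c ≠ c0 := fun h => h0 (einj (by rw [he, hp0, h]))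
        have hcc1 : c ≠ c1 := fun h => h1 (einj (by rw [he, hp1, h]))
        have a0 : (p : ℕ) + 1 = (p0 : ℕ) ∨ (p0 : ℕ) + 1 = (p : ℕ) :=
          (hpe p p0).mp (by rw [he, hp0]; exact hcc0)
        have a1 : (p : ℕ) + 1 = (p1 : ℕ) ∨ (p1 : ℕ) + 1 = (p : ℕ) :=
          (hpe p p1).mp (by rw [he, hp1]; exact hcc1)
        exact absurd rfl (by omega : p ≠ p)
    obtain ⟨q0, q1, i, j, hij, hq01, hq0e, hq1e, hthird'⟩ :
        ∃ (q0 q1 : Fin 6) (i j : Fin 3), i ≠ j ∧ (q0 : ℕ) + 1 = (q1 : ℕ) ∧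
          e q0 = Sum.inr i ∧ e q1 = Sum.inr j ∧
          (∀ p : Fin 6, p ≠ q0 → p ≠ q1 →
            ∃ x : {x : V // x ∉ ⋃ i, A i}, e p = Sum.inl x) := by
      rcases hcons with h | h
      · exact ⟨p0, p1, c0, c1, hc01, h, hp0, hp1, fun p a b => hthird p a b⟩
      · exact ⟨p1, p0, c1, c0, hc01.symm, h, hp1, hp0, fun p a b => hthird p b a⟩
    obtain ⟨xE, kU, kadj, knadj, kne, kclass⟩ := extract_facts e (v ⟨0, by omega⟩)
      (fun p => p ≠ q0 ∧ p ≠ q1) (fun p hp => hthird' p hp.1 hp.2)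
    set m := (q0 : ℕ) with hmdef
    have hm5 : m + 1 < 6 := by have := q1.isLt; omega
    have hok : ∀ r (h : r < 6), r ≠ m → r ≠ m + 1 →
        ((⟨r, h⟩ : Fin 6) ≠ q0 ∧ (⟨r, h⟩ : Fin 6) ≠ q1) := by
      intro r h h0 h1
      constructor
      · intro he; exact h0 (congrArg Fin.val he)
      · intro he
        have hv := congrArg Fin.val he
        simp only [] at hv
        omega
    have xU : ∀ r, ∀ h : r < 6, r ≠ m → r ≠ m+1 → xE r ∉ ⋃ t, A t :=
      fun r h a b => kU r h (hok r h a b)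
    have xadj : ∀ r s, ∀ hr : r < 6, ∀ hs : s < 6, r ≠ m → r ≠ m+1 → s ≠ m → s ≠ m+1 →
        (r + 1 = s ∨ s + 1 = r) → G.Adj (xE r) (xE s) :=
      fun r s hr hs a b c d hc => kadj r s hr hs (hok r hr a b) (hok s hs c d) hc
    have xnadj : ∀ r s, ∀ hr : r < 6, ∀ hs : s < 6, r ≠ m → r ≠ m+1 → s ≠ m → s ≠ m+1 →
        ¬ (r + 1 = s ∨ s + 1 = r) → ¬ G.Adj (xE r) (xE s) :=
      fun r s hr hs a b c d hc => knadj r s hr hs (hok r hr a b) (hok s hs c d) hc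
    have xne : ∀ r s, ∀ hr : r < 6, ∀ hs : s < 6, r ≠ m → r ≠ m+1 → s ≠ m → s ≠ m+1 →
        r ≠ s → xE r ≠ xE s :=
      fun r s hr hs a b c d hc => kne r s hr hs (hok r hr a b) (hok s hs c d) hc
    have xci_yes : ∀ r, ∀ h : r < 6, r ≠ m → r ≠ m+1 → (r + 1 = m ∨ m + 1 = r) →
        ∃ w ∈ A i, G.Adj (xE r) w :=
      fun r h a b hc => (kclass r h i q0 (hok r h a b) hq0e).1 hc
    have xci_no : ∀ r, ∀ h : r < 6, r ≠ m → r ≠ m+1 → ¬ (r + 1 = m ∨ m + 1 = r) →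
        ¬ ∃ w ∈ A i, G.Adj (xE r) w :=
      fun r h a b hc => (kclass r h i q0 (hok r h a b) hq0e).2 hc
    have xcj_yes : ∀ r, ∀ h : r < 6, r ≠ m → r ≠ m+1 → (r + 1 = m + 1 ∨ m + 2 = r) →
        ∃ w ∈ A j, G.Adj (xE r) w :=
      fun r h a b hc => (kclass r h j q1 (hok r h a b) hq1e).1 (by omega)
    have xcj_no : ∀ r, ∀ h : r < 6, r ≠ m → r ≠ m+1 → ¬ (r + 1 = m + 1 ∨ m + 2 = r) →
        ¬ ∃ w ∈ A j, G.Adj (xE r) w :=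
      fun r h a b hc => (kclass r h j q1 (hok r h a b) hq1e).2 (by omega)
    have hxne : ∀ (y : V) (c : Fin 3), y ∈ A c → ∀ r, ∀ h : r < 6, r ≠ m → r ≠ m+1 →
        y ≠ xE r := by
      intro y c hy r h a b he
      exact (xU r h a b) (by rw [← he]; exact Set.mem_iUnion.mpr ⟨c, hy⟩)
    rcases (show m = 0 ∨ (1 ≤ m ∧ m ≤ 3) ∨ m = 4 by omega) with hm0 | hmid | hm4
    · -- m = 0 : contracted pair at the start
      obtain ⟨w', hw'A, hw'adj⟩ := xcj_yes 2 (by omega) (by omega) (by omega) (by omega)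
      obtain ⟨w, hwA, hww'⟩ := tripod_nbr hts j i (Ne.symm hij) w' hw'A
      apply splice_six G hP6 1 4 0 (by omega) (by omega) (by omega)
        (fun _ => w) (fun _ => w') (fun t => xE (t+2))
      · intro t ht; exact absurd ht (by omega)
      · exact hww'.symm
      · intro t ht; exact absurd ht (by omega)
      · exact hw'adj.symm
      · intro t ht
        exact xadj (t+2) (t+1+2) (by omega) (by omega) (by omega) (by omega) (by omega)
          (by omega) (by omega)
      · intro s t h1 h2; exact absurd h2 (by omega)
      · intro s t h1 h2; exact absurd h2 (by omega)
      · intro s t hs ht hexc; exact absurd ⟨by omega, by omega⟩ hexc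
      · intro s t hs ht
        exact fun h => (hdisj i j hij).le_bot ⟨hwA, h.symm ▸ hw'A⟩
      · intro s t h1 h2; exact absurd h1 (by omega)
      · intro s t h1 h2; exact absurd h1 (by omega)
      · intro s t hs ht hexc
        have ht1 : 1 ≤ t := by
          by_contra hh
          exact hexc ⟨by omega, by omega⟩
        intro h
        exact xcj_no (t+2) (by omega) (by omega) (by omega) (by omega) ⟨w', hw'A, h.symm⟩
      · intro s t hs ht
        exact hxne w' j hw'A (t+2) (by omega) (by omega) (by omega)
      · intro s t h1 h2
        exact xnadj (s+2) (t+2) (by omega) (by omega) (by omega) (by omega) (by omega)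
          (by omega) (by omega)
      · intro s t h1 h2
        exact xne (s+2) (t+2) (by omega) (by omega) (by omega) (by omega) (by omega)
          (by omega) (by omega)
      · intro s t hs ht
        intro h
        exact xci_no (t+2) (by omega) (by omega) (by omega) (by omega) ⟨w, hwA, h.symm⟩
      · intro s t hs ht
        exact hxne w i hwA (t+2) (by omega) (by omega) (by omega)
    · -- 1 ≤ m ≤ 3 : contracted pair in the middle
      obtain ⟨hm1, hm3⟩ := hmid
      obtain ⟨n, u, huc, huB, huS, huT, hchord, huinj, huint⟩ :=
        tripod_connect hts i j hij
          {w | w ∈ A i ∧ G.Adj (xE (m-1)) w} {w | w ∈ A j ∧ G.Adj (xE (m+2)) w}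
          (by
            obtain ⟨w, hwA, hw⟩ := xci_yes (m-1) (by omega) (by omega) (by omega) (by omega)
            exact ⟨w, hwA, hw⟩)
          (by
            obtain ⟨w, hwA, hw⟩ := xcj_yes (m+2) (by omega) (by omega) (by omega) (by omega)
            exact ⟨w, hwA, hw⟩)
          (fun w hw => Or.inl hw.1) (fun w hw => Or.inr hw.1)
      have hn1 : 1 ≤ n := by
        by_contra hh
        push_neg at hh
        interval_cases n
        exact (hdisj i j hij).le_bot ⟨huS.1, huT.1⟩
      have hun : ∀ t, t ≤ n → u t ∈ ⋃ t', A t' := by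
        intro t ht
        rcases huB t ht with h | h
        · exact Set.mem_iUnion.mpr ⟨i, h⟩
        · exact Set.mem_iUnion.mpr ⟨j, h⟩
      have hxu_left : ∀ t, 1 ≤ t → t ≤ n → ¬ G.Adj (xE (m-1)) (u t) := by
        intro t h1 h2 hadj
        rcases huB t h2 with hAi | hAj
        · by_cases htn : t = n
          · subst htn; exact (hdisj i j hij).le_bot ⟨hAi, huT.1⟩
          · exact (huint t h1 (by omega)).1 ⟨hAi, hadj⟩
        · exact xcj_no (m-1) (by omega) (by omega) (by omega) (by omega) ⟨u t, hAj, hadj⟩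
      have hxu_right : ∀ t, t < n → ¬ G.Adj (xE (m+2)) (u t) := by
        intro t ht hadj
        rcases huB t (by omega) with hAi | hAj
        · exact xci_no (m+2) (by omega) (by omega) (by omega) (by omega) ⟨u t, hAi, hadj⟩
        · by_cases ht0 : t = 0
          · subst ht0; exact (hdisj i j hij).le_bot ⟨huS.1, hAj⟩
          · exact (huint t (by omega) ht).2 ⟨hAj, hadj⟩
      have hxu_other : ∀ r, r < 6 → r ≠ m-1 → r ≠ m → r ≠ m+1 → r ≠ m+2 →
          ∀ t, t ≤ n → ¬ G.Adj (xE r) (u t) := by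
        intro r h6 hr1 hr2 hr3 hr4 t ht hadj
        rcases huB t ht with hAi | hAj
        · exact xci_no r h6 hr2 hr3 (by omega) ⟨u t, hAi, hadj⟩
        · exact xcj_no r h6 hr2 hr3 (by omega) ⟨u t, hAj, hadj⟩
      apply splice_six G hP6 m (4-m) n (by omega) (by omega) (by omega)
        xE u (fun t => xE (t+m+2))
      · intro t ht
        exact xadj t (t+1) (by omega) (by omega) (by omega) (by omega) (by omega)
          (by omega) (by omega)
      · exact huS.2
      · exact huc
      · simpa using huT.2.symm
      · intro t ht
        exact xadj (t+m+2) (t+1+m+2) (by omega) (by omega) (by omega) (by omega)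
          (by omega) (by omega) (by omega)
      · intro s t h1 h2
        exact xnadj s t (by omega) (by omega) (by omega) (by omega) (by omega)
          (by omega) (by omega)
      · intro s t h1 h2
        exact xne s t (by omega) (by omega) (by omega) (by omega) (by omega)
          (by omega) (by omega)
      · intro s t hs ht hexc
        by_cases hsm : s = m-1
        · have ht1 : 1 ≤ t := by
            by_contra hh
            exact hexc ⟨by omega, by omega⟩
          rw [hsm]
          exact hxu_left t ht1 ht
        · exact hxu_other s (by omega) hsm (by omega) (by omega) (by omega) t ht
      · intro s t hs ht heq
        exact (xU s (by omega) (by omega) (by omega)) (by rw [heq]; exact hun t ht)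
      · exact hchord
      · exact huinj
      · intro s t hs ht hexc
        by_cases ht0 : t = 0
        · have hsn : s < n := by
            rcases Nat.lt_or_ge s n with h | h
            · exact h
            · exact absurd ⟨by omega, ht0⟩ hexc
          subst ht0
          intro h
          exact hxu_right s hsn (by simpa using h.symm)
        · intro h
          exact hxu_other (t+m+2) (by omega) (by omega) (by omega) (by omega) (by omega)
            s hs h.symm
      · intro s t hs ht heq
        exact (xU (t+m+2) (by omega) (by omega) (by omega)) (by rw [← heq]; exact hun s hs)
      · intro s t h1 h2
        exact xnadj (s+m+2) (t+m+2) (by omega) (by omega) (by omega) (by omega) (by omega)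
          (by omega) (by omega)
      · intro s t h1 h2
        exact xne (s+m+2) (t+m+2) (by omega) (by omega) (by omega) (by omega) (by omega)
          (by omega) (by omega)
      · intro s t hs ht
        exact xnadj s (t+m+2) (by omega) (by omega) (by omega) (by omega) (by omega)
          (by omega) (by omega)
      · intro s t hs ht
        exact xne s (t+m+2) (by omega) (by omega) (by omega) (by omega) (by omega)
          (by omega) (by omega)
    · -- m = 4 : contracted pair at the end
      obtain ⟨w, hwA, hwadj⟩ := xci_yes 3 (by omega) (by omega) (by omega) (by omega)
      obtain ⟨w', hw'A, hww'⟩ := tripod_nbr hts i j hij w hwA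
      apply splice_six G hP6 4 1 0 (by omega) (by omega) (by omega)
        xE (fun _ => w) (fun _ => w')
      · intro t ht
        exact xadj t (t+1) (by omega) (by omega) (by omega) (by omega) (by omega)
          (by omega) (by omega)
      · exact hwadj
      · intro t ht; exact absurd ht (by omega)
      · exact hww'
      · intro t ht; exact absurd ht (by omega)
      · intro s t h1 h2
        exact xnadj s t (by omega) (by omega) (by omega) (by omega) (by omega)
          (by omega) (by omega)
      · intro s t h1 h2
        exact xne s t (by omega) (by omega) (by omega) (by omega) (by omega)
          (by omega) (by omega)
      · intro s t hs ht hexc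
        have hs3 : s ≠ 3 := fun hh => hexc ⟨by omega, by omega⟩
        intro h
        exact xci_no s (by omega) (by omega) (by omega) (by omega) ⟨w, hwA, h⟩
      · intro s t hs ht
        exact (hxne w i hwA s (by omega) (by omega) (by omega)).symm
      · intro s t h1 h2; exact absurd h1 (by omega)
      · intro s t h1 h2; exact absurd h1 (by omega)
      · intro s t hs ht hexc; exact absurd ⟨by omega, by omega⟩ hexc
      · intro s t hs ht
        exact fun h => (hdisj i j hij).le_bot ⟨h ▸ hwA, hw'A⟩
      · intro s t h1 h2; exact absurd h2 (by omega)
      · intro s t h1 h2; exact absurd h2 (by omega)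
      · intro s t hs ht
        intro h
        exact xcj_no s (by omega) (by omega) (by omega) (by omega) ⟨w', hw'A, h⟩
      · intro s t hs ht
        exact (hxne w' j hw'A s (by omega) (by omega) (by omega)).symm
  · -- ===== exactly one contracted vertex on the path =====
    have hsingle : ∀ p : Fin 6, p ≠ p0 →
        ∃ x : {x : V // x ∉ ⋃ i, A i}, e p = Sum.inl x := by
      intro p hp
      cases he : e p with
      | inl x => exact ⟨x, rfl⟩
      | inr c => exact absurd ⟨p, hp, c, he⟩ hr2
    obtain ⟨xE, kU, kadj, knadj, kne, kclass⟩ := extract_facts e (v ⟨0, by omega⟩)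
      (fun p => p ≠ p0) hsingle
    set m := (p0 : ℕ) with hmdef
    have hm6 : m < 6 := p0.isLt
    have hok : ∀ r (h : r < 6), r ≠ m → (⟨r, h⟩ : Fin 6) ≠ p0 :=
      fun r h hr he => hr (congrArg Fin.val he)
    have xU : ∀ r, ∀ h : r < 6, r ≠ m → xE r ∉ ⋃ t, A t :=
      fun r h a => kU r h (hok r h a)
    have xadj : ∀ r s, ∀ hr : r < 6, ∀ hs : s < 6, r ≠ m → s ≠ m →
        (r + 1 = s ∨ s + 1 = r) → G.Adj (xE r) (xE s) :=
      fun r s hr hs a b hc => kadj r s hr hs (hok r hr a) (hok s hs b) hc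
    have xnadj : ∀ r s, ∀ hr : r < 6, ∀ hs : s < 6, r ≠ m → s ≠ m →
        ¬ (r + 1 = s ∨ s + 1 = r) → ¬ G.Adj (xE r) (xE s) :=
      fun r s hr hs a b hc => knadj r s hr hs (hok r hr a) (hok s hs b) hc
    have xne : ∀ r s, ∀ hr : r < 6, ∀ hs : s < 6, r ≠ m → s ≠ m →
        r ≠ s → xE r ≠ xE s :=
      fun r s hr hs a b hc => kne r s hr hs (hok r hr a) (hok s hs b) hc
    have xc_yes : ∀ r, ∀ h : r < 6, r ≠ m → (r + 1 = m ∨ m + 1 = r) →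
        ∃ w ∈ A c0, G.Adj (xE r) w :=
      fun r h a hc => (kclass r h c0 p0 (hok r h a) hp0).1 hc
    have xc_no : ∀ r, ∀ h : r < 6, r ≠ m → ¬ (r + 1 = m ∨ m + 1 = r) →
        ¬ ∃ w ∈ A c0, G.Adj (xE r) w :=
      fun r h a hc => (kclass r h c0 p0 (hok r h a) hp0).2 hc
    have hxne : ∀ (y : V) (c : Fin 3), y ∈ A c → ∀ r, ∀ h : r < 6, r ≠ m →
        y ≠ xE r := by
      intro y c hy r h a he
      exact (xU r h a) (by rw [← he]; exact Set.mem_iUnion.mpr ⟨c, hy⟩)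
    rcases (show m = 0 ∨ m = 5 ∨ (1 ≤ m ∧ m ≤ 4) by omega) with hm0 | hm5 | hmid
    · -- m = 0
      obtain ⟨w, hwA, hwadj⟩ := xc_yes 1 (by omega) (by omega) (by omega)
      apply splice_six G hP6 1 4 0 (by omega) (by omega) (by omega)
        (fun _ => w) (fun _ => xE 1) (fun t => xE (t+2))
      · intro t ht; exact absurd ht (by omega)
      · exact hwadj.symm
      · intro t ht; exact absurd ht (by omega)
      · exact xadj 1 2 (by omega) (by omega) (by omega) (by omega) (by omega)
      · intro t ht
        exact xadj (t+2) (t+1+2) (by omega) (by omega) (by omega) (by omega) (by omega)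
      · intro s t h1 h2; exact absurd h2 (by omega)
      · intro s t h1 h2; exact absurd h2 (by omega)
      · intro s t hs ht hexc; exact absurd ⟨by omega, by omega⟩ hexc
      · intro s t hs ht
        exact hxne w c0 hwA 1 (by omega) (by omega)
      · intro s t h1 h2; exact absurd h1 (by omega)
      · intro s t h1 h2; exact absurd h1 (by omega)
      · intro s t hs ht hexc
        have ht1 : 1 ≤ t := by
          by_contra hh
          exact hexc ⟨by omega, by omega⟩
        exact xnadj 1 (t+2) (by omega) (by omega) (by omega) (by omega) (by omega)
      · intro s t hs ht
        exact xne 1 (t+2) (by omega) (by omega) (by omega) (by omega) (by omega)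
      · intro s t h1 h2
        exact xnadj (s+2) (t+2) (by omega) (by omega) (by omega) (by omega) (by omega)
      · intro s t h1 h2
        exact xne (s+2) (t+2) (by omega) (by omega) (by omega) (by omega) (by omega)
      · intro s t hs ht
        intro h
        exact xc_no (t+2) (by omega) (by omega) (by omega) ⟨w, hwA, h.symm⟩
      · intro s t hs ht
        exact hxne w c0 hwA (t+2) (by omega) (by omega)
    · -- m = 5
      obtain ⟨w, hwA, hwadj⟩ := xc_yes 4 (by omega) (by omega) (by omega)
      apply splice_six G hP6 4 1 0 (by omega) (by omega) (by omega)
        xE (fun _ => xE 4) (fun _ => w)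
      · intro t ht
        exact xadj t (t+1) (by omega) (by omega) (by omega) (by omega) (by omega)
      · exact xadj 3 4 (by omega) (by omega) (by omega) (by omega) (by omega)
      · intro t ht; exact absurd ht (by omega)
      · exact hwadj
      · intro t ht; exact absurd ht (by omega)
      · intro s t h1 h2
        exact xnadj s t (by omega) (by omega) (by omega) (by omega) (by omega)
      · intro s t h1 h2
        exact xne s t (by omega) (by omega) (by omega) (by omega) (by omega)
      · intro s t hs ht hexc
        have hs3 : s ≠ 3 := fun hh => hexc ⟨by omega, by omega⟩
        exact xnadj s 4 (by omega) (by omega) (by omega) (by omega) (by omega)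
      · intro s t hs ht
        exact xne s 4 (by omega) (by omega) (by omega) (by omega) (by omega)
      · intro s t h1 h2; exact absurd h1 (by omega)
      · intro s t h1 h2; exact absurd h1 (by omega)
      · intro s t hs ht hexc; exact absurd ⟨by omega, by omega⟩ hexc
      · intro s t hs ht
        exact (hxne w c0 hwA 4 (by omega) (by omega)).symm
      · intro s t h1 h2; exact absurd h2 (by omega)
      · intro s t h1 h2; exact absurd h2 (by omega)
      · intro s t hs ht
        intro h
        exact xc_no s (by omega) (by omega) (by omega) ⟨w, hwA, h⟩
      · intro s t hs ht
        exact (hxne w c0 hwA s (by omega) (by omega)).symm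
    · -- 1 ≤ m ≤ 4
      obtain ⟨hm1, hm4'⟩ := hmid
      by_cases hcom : ∃ w, w ∈ A c0 ∧ G.Adj (xE (m-1)) w ∧ G.Adj (xE (m+1)) w
      · -- common neighbour
        obtain ⟨w, hwA, hw1, hw2⟩ := hcom
        apply splice_six G hP6 m (5-m) 0 (by omega) (by omega) (by omega)
          xE (fun _ => w) (fun t => xE (t+m+1))
        · intro t ht
          exact xadj t (t+1) (by omega) (by omega) (by omega) (by omega) (by omega)
        · exact hw1
        · intro t ht; exact absurd ht (by omega)
        · simpa using hw2.symm
        · intro t ht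
          exact xadj (t+m+1) (t+1+m+1) (by omega) (by omega) (by omega) (by omega) (by omega)
        · intro s t h1 h2
          exact xnadj s t (by omega) (by omega) (by omega) (by omega) (by omega)
        · intro s t h1 h2
          exact xne s t (by omega) (by omega) (by omega) (by omega) (by omega)
        · intro s t hs ht hexc
          have hsm : s ≠ m - 1 := fun hh => hexc ⟨by omega, by omega⟩
          intro h
          exact xc_no s (by omega) (by omega) (by omega) ⟨w, hwA, h⟩
        · intro s t hs ht
          exact (hxne w c0 hwA s (by omega) (by omega)).symm
        · intro s t h1 h2; exact absurd h1 (by omega)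
        · intro s t h1 h2; exact absurd h1 (by omega)
        · intro s t hs ht hexc
          have ht1 : 1 ≤ t := by
            by_contra hh
            exact hexc ⟨by omega, by omega⟩
          intro h
          exact xc_no (t+m+1) (by omega) (by omega) (by omega) ⟨w, hwA, h.symm⟩
        · intro s t hs ht
          exact hxne w c0 hwA (t+m+1) (by omega) (by omega)
        · intro s t h1 h2
          exact xnadj (s+m+1) (t+m+1) (by omega) (by omega) (by omega) (by omega) (by omega)
        · intro s t h1 h2
          exact xne (s+m+1) (t+m+1) (by omega) (by omega) (by omega) (by omega) (by omega)
        · intro s t hs ht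
          exact xnadj s (t+m+1) (by omega) (by omega) (by omega) (by omega) (by omega)
        · intro s t hs ht
          exact xne s (t+m+1) (by omega) (by omega) (by omega) (by omega) (by omega)
      · -- no common neighbour: use the tripod structure
        by_cases hm4 : m = 4
        · have hr1 : m - 1 = 3 := by omega
          have hr2 : m + 1 = 5 := by omega
          rw [hr1, hr2] at hcom
          exact case1_disjoint hmax hno hP6 c0 (xE 5) (xE 3) (xE 2)
            (xU 5 (by omega) (by omega)) (xU 3 (by omega) (by omega))
            (xU 2 (by omega) (by omega))
            (xc_yes 5 (by omega) (by omega) (by omega))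
            (xc_yes 3 (by omega) (by omega) (by omega))
            (fun ⟨w, hw, h1, h2⟩ => hcom ⟨w, hw, h2, h1⟩)
            (xnadj 5 3 (by omega) (by omega) (by omega) (by omega) (by omega))
            (xnadj 5 2 (by omega) (by omega) (by omega) (by omega) (by omega))
            (xadj 3 2 (by omega) (by omega) (by omega) (by omega) (by omega))
            (xc_no 2 (by omega) (by omega) (by omega))
            (xne 5 3 (by omega) (by omega) (by omega) (by omega) (by omega))
            (xne 5 2 (by omega) (by omega) (by omega) (by omega) (by omega))
        · exact case1_disjoint hmax hno hP6 c0 (xE (m-1)) (xE (m+1)) (xE (m+2))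
            (xU (m-1) (by omega) (by omega)) (xU (m+1) (by omega) (by omega))
            (xU (m+2) (by omega) (by omega))
            (xc_yes (m-1) (by omega) (by omega) (by omega))
            (xc_yes (m+1) (by omega) (by omega) (by omega))
            (fun ⟨w, hw, h1, h2⟩ => hcom ⟨w, hw, h1, h2⟩)
            (xnadj (m-1) (m+1) (by omega) (by omega) (by omega) (by omega) (by omega))
            (xnadj (m-1) (m+2) (by omega) (by omega) (by omega) (by omega) (by omega))
            (xadj (m+1) (m+2) (by omega) (by omega) (by omega) (by omega) (by omega))
            (xc_no (m+2) (by omega) (by omega) (by omega))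
            (xne (m-1) (m+1) (by omega) (by omega) (by omega) (by omega) (by omega))
            (xne (m-1) (m+2) (by omega) (by omega) (by omega) (by omega) (by omega))
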